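/- Let C : finCard → Ab be an (augmented) symmetric cosimplicial abelian group, write C_n = C(n), δ^n_i = C(δ^n_i), σ^n_i = C(σ^n_i), and define the differential ∂_n : C_n → C_{n+1} by ∂_n(c) = Σ_{i=1}^{n+1} (−1)^{i−1} δ^n_i(c). If c ∈ C_n is alternating, i.e. σ^n_i(c) = −c for all 1 ≤ i ≤ n−1, then ∂_n(c) is alternating, i.e. σ^{n+1}_i(∂_n(c)) = −∂_n(c) for all 1 ≤ i ≤ n. Hence the alternating elements form a subcomplex of the cochain complex associated to C. -/

import Mathlib

open CategoryTheory

/-- The category of finite cardinals: objects are natural numbers, and morphisms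
`n ⟶ m` are all functions `Fin n → Fin m` (composition is diagrammatic). -/
structure FinCard : Type where
  len : ℕ

instance : Category FinCard where
  Hom n m := Fin n.len → Fin m.len
  id _ := _root_.id
  comp f g := g ∘ f
  id_comp _ := rfl
  comp_id _ := rfl
  assoc _ _ _ := rfl

/-- The object of `FinCard` corresponding to `n : ℕ`. -/
def FinCard.of (n : ℕ) : FinCard := ⟨n⟩

/-- The coface `δ^n_i : [n] → [n+1]` (1-based: `x ↦ x` if `x < i`, `x ↦ x+1` if `x ≥ i`),
as a morphism of `FinCard`. -/
def deltaHom (n i : ℕ) : FinCard.of n ⟶ FinCard.of (n + 1) :=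
  show Fin n → Fin (n + 1) from fun x =>
  if x.val + 1 < i then ⟨x.val, by have := x.isLt; omega⟩
  else ⟨x.val + 1, by have := x.isLt; omega⟩

/-- The symmetry `σ^n_i : [n] → [n]` (the transposition exchanging `i` and `i+1`, 1-based;
i.e. the transposition of `i−1` and `i` in 0-based terms), as a morphism of `FinCard`.
Requires `1 ≤ i ≤ n−1`. -/
def sigmaHom (n i : ℕ) (h1 : 1 ≤ i) (h2 : i + 1 ≤ n) : FinCard.of n ⟶ FinCard.of n :=
  show Fin n → Fin n from ⇑(Equiv.swap (⟨i - 1, by omega⟩ : Fin n) ⟨i, by omega⟩)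

/-- An element `c` of the `n`-th term of an (augmented) symmetric cosimplicial abelian group
is alternating if all the symmetries `σ^n_i` act on it by `-1`. -/
def IsAlternating (C : FinCard ⥤ AddCommGrpCat) (n : ℕ) (c : C.obj (FinCard.of n)) : Prop :=
  ∀ (i : ℕ) (h1 : 1 ≤ i) (h2 : i + 1 ≤ n), (C.map (sigmaHom n i h1 h2)) c = -c

/-- The differential `∂_n (c) = Σ_{i=1}^{n+1} (−1)^{i−1} δ^n_i (c)` of the cochain complex
associated to an (augmented) symmetric cosimplicial abelian group. -/
def differential (C : FinCard ⥤ AddCommGrpCat) (n : ℕ) (c : C.obj (FinCard.of n)) :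
    C.obj (FinCard.of (n + 1)) :=
  ∑ i ∈ Finset.Icc 1 (n + 1), ((-1 : ℤ) ^ (i - 1)) • (C.map (deltaHom n i)) c

lemma sigmaHom_val (n i : ℕ) (h1 : 1 ≤ i) (h2 : i + 1 ≤ n) (x : Fin n) :
    (sigmaHom n i h1 h2 x : ℕ) =
      if (x : ℕ) = i - 1 then i else if (x : ℕ) = i then i - 1 else x := by
  obtain ⟨a, ha⟩ := x
  show Fin.val (Equiv.swap (⟨i - 1, by omega⟩ : Fin n) ⟨i, by omega⟩ ⟨a, ha⟩) = _
  rw [Equiv.swap_apply_def]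
  simp only [Fin.mk.injEq, Fin.ext_iff]
  split_ifs <;> rfl

lemma deltaHom_val (n j : ℕ) (x : Fin n) :
    (deltaHom n j x : ℕ) = if (x : ℕ) + 1 < j then (x : ℕ) else (x : ℕ) + 1 := by
  show Fin.val (if (x : ℕ) + 1 < j then (⟨(x : ℕ), Nat.lt_succ_of_lt x.isLt⟩ : Fin (n + 1))
      else ⟨(x : ℕ) + 1, Nat.succ_lt_succ x.isLt⟩) = _
  split_ifs <;> rfl

lemma delta_comp_sigma_self (n i : ℕ) (h1 : 1 ≤ i) (h2 : i + 1 ≤ n + 1) :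
    deltaHom n i ≫ sigmaHom (n+1) i h1 h2 = deltaHom n (i + 1) := by
  funext x
  have hx : (x : ℕ) < n := x.isLt
  show sigmaHom (n+1) i h1 h2 (deltaHom n i x) = deltaHom n (i+1) x
  rw [Fin.ext_iff]
  erw [sigmaHom_val, deltaHom_val, deltaHom_val]
  split_ifs <;> omega

lemma delta_comp_sigma_succ (n i : ℕ) (h1 : 1 ≤ i) (h2 : i + 1 ≤ n + 1) :
    deltaHom n (i + 1) ≫ sigmaHom (n+1) i h1 h2 = deltaHom n i := by
  funext x
  have hx : (x : ℕ) < n := x.isLt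
  show sigmaHom (n+1) i h1 h2 (deltaHom n (i+1) x) = deltaHom n i x
  rw [Fin.ext_iff]
  erw [sigmaHom_val, deltaHom_val, deltaHom_val]
  split_ifs <;> omega

lemma sigma_comp_delta_lt (n i j : ℕ) (hj : 1 ≤ j) (hji : j < i) (h2 : i + 1 ≤ n + 1) :
    sigmaHom n (i-1) (by omega) (by omega) ≫ deltaHom n j =
      deltaHom n j ≫ sigmaHom (n+1) i (by omega) h2 := by
  funext x
  have hx : (x : ℕ) < n := x.isLt
  show deltaHom n j (sigmaHom n (i-1) (by omega) (by omega) x) =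
      sigmaHom (n+1) i (by omega) h2 (deltaHom n j x)
  rw [Fin.ext_iff]
  erw [deltaHom_val, sigmaHom_val, sigmaHom_val, deltaHom_val]
  split_ifs <;> omega

lemma sigma_comp_delta_gt (n i j : ℕ) (h1 : 1 ≤ i) (hji : i + 1 < j) (hj : j ≤ n + 1) :
    sigmaHom n i h1 (by omega) ≫ deltaHom n j =
      deltaHom n j ≫ sigmaHom (n+1) i h1 (by omega) := by
  funext x
  have hx : (x : ℕ) < n := x.isLt
  show deltaHom n j (sigmaHom n i h1 (by omega) x) =
      sigmaHom (n+1) i h1 (by omega) (deltaHom n j x)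
  rw [Fin.ext_iff]
  erw [deltaHom_val, sigmaHom_val, sigmaHom_val, deltaHom_val]
  split_ifs <;> omega

/-- STATEMENT 9: in an (augmented) symmetric cosimplicial abelian group
`C : finCard ⥤ Ab`, the differential of an alternating element is alternating; hence the
alternating elements form a subcomplex of the associated cochain complex. -/
theorem differential_of_alternating_is_alternating
    (C : FinCard ⥤ AddCommGrpCat) (n : ℕ) (c : C.obj (FinCard.of n))
    (hc : IsAlternating C n c) :
    IsAlternating C (n + 1) (differential C n c) := by
  intro i hi1 hi2
  have hcomp : ∀ {a b d : FinCard} (f : a ⟶ b) (g : b ⟶ d) (x : C.obj a),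
      C.map (f ≫ g) x = C.map g (C.map f x) := by
    intro a b d f g x
    rw [C.map_comp]
    rfl
  set σ := sigmaHom (n + 1) i hi1 hi2 with hσ
  have key : ∀ j ∈ Finset.Icc 1 (n + 1),
      ((-1 : ℤ) ^ (j - 1)) • (C.map σ) ((C.map (deltaHom n j)) c) =
      -(((-1 : ℤ) ^ (Equiv.swap i (i + 1) j - 1)) •
        (C.map (deltaHom n (Equiv.swap i (i + 1) j))) c) := by
    intro j hj
    rw [Finset.mem_Icc] at hj
    have hpow : (-1 : ℤ) ^ i = -(-1 : ℤ) ^ (i - 1) := by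
      conv_lhs => rw [show i = (i - 1) + 1 from by omega]
      rw [pow_succ, mul_neg_one]
    by_cases h1 : j = i
    · subst h1
      rw [Equiv.swap_apply_left, ← hcomp, delta_comp_sigma_self n j hi1 hi2,
        Nat.add_sub_cancel, hpow, neg_smul, neg_neg]
    · by_cases h2 : j = i + 1
      · subst h2
        rw [Equiv.swap_apply_right, ← hcomp, delta_comp_sigma_succ n i hi1 hi2,
          Nat.add_sub_cancel, hpow, neg_smul]
      · rw [Equiv.swap_apply_of_ne_of_ne h1 h2, ← hcomp]
        rcases Nat.lt_or_ge j i with hlt | hge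
        · rw [← sigma_comp_delta_lt n i j (by omega) hlt hi2, hcomp,
            hc (i - 1) (by omega) (by omega), map_neg, smul_neg]
        · have hgt : i + 1 < j := by omega
          rw [← sigma_comp_delta_gt n i j hi1 hgt (by omega), hcomp,
            hc i hi1 (by omega), map_neg, smul_neg]
  show (C.map σ) (differential C n c) = -differential C n c
  unfold differential
  rw [map_sum]
  simp only [map_zsmul]
  calc ∑ j ∈ Finset.Icc 1 (n + 1), ((-1 : ℤ) ^ (j - 1)) • (C.map σ) ((C.map (deltaHom n j)) c)
      = ∑ j ∈ Finset.Icc 1 (n + 1), -(((-1 : ℤ) ^ (Equiv.swap i (i + 1) j - 1)) •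
          (C.map (deltaHom n (Equiv.swap i (i + 1) j))) c) := Finset.sum_congr rfl key
    _ = -∑ j ∈ Finset.Icc 1 (n + 1), ((-1 : ℤ) ^ (Equiv.swap i (i + 1) j - 1)) •
          (C.map (deltaHom n (Equiv.swap i (i + 1) j))) c := by
        rw [← Finset.sum_neg_distrib]
    _ = -∑ j ∈ Finset.Icc 1 (n + 1), ((-1 : ℤ) ^ (j - 1)) • (C.map (deltaHom n j)) c := by
        congr 1
        refine Finset.sum_equiv (Equiv.swap i (i + 1)) (fun j => ?_) (fun j hj => rfl)
        rw [Finset.mem_Icc, Finset.mem_Icc, Equiv.swap_apply_def]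
        split_ifs <;> omega
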